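/- arXiv:2512.15471 — 2 statements merged into one kernel-verified Lean document; each statement's English description precedes it below -/
import Mathlib

section
/- The optimal value of the RM_14 LP (maximize the minimum interval length) on a chain of k jobs with total processing time P and first release s_1 equals (d - s_1 - P)/k when d ≥ s_1 + P. -/
open Finset

/-- The optimal value of the `RM₁₄` LP (maximize the minimum interval length) on a
chain of `k` jobs with total processing time `P` and first release `s₁` equals
`(d - s₁ - P) / k` when `d ≥ s₁ + P`. -/
theorem rm14_chain_optimal_value (k : ℕ) (hk : 0 < k)
    (p : Fin k → ℝ) (hp : ∀ t, 0 ≤ p t)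
    (d s1 : ℝ) (hd : s1 + ∑ t, p t ≤ d) :
    IsGreatest {v : ℝ | ∃ e l : Fin k → ℝ,
      s1 ≤ e ⟨0, hk⟩ ∧ (∀ t, e t ≤ l t) ∧
      (∀ t : Fin k, ∀ h : (t : ℕ) + 1 < k, l t + p t ≤ e ⟨(t : ℕ) + 1, h⟩) ∧
      l ⟨k - 1, Nat.sub_lt hk Nat.one_pos⟩ + p ⟨k - 1, Nat.sub_lt hk Nat.one_pos⟩ ≤ d ∧
      (∀ t, v ≤ l t - e t)}
      ((d - s1 - ∑ t, p t) / k) := by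
  set q : ℕ → ℝ := fun n => if h : n < k then p ⟨n, h⟩ else 0 with hq
  have hqval : ∀ t : Fin k, q (t : ℕ) = p t := by
    intro t; simp [hq, t.isLt]
  have hsum : ∑ t, p t = ∑ n ∈ Finset.range k, q n := by
    rw [← Fin.sum_univ_eq_sum_range q]
    exact Finset.sum_congr rfl fun t _ => (hqval t).symm
  have hkR : (0 : ℝ) < (k : ℝ) := by exact_mod_cast hk
  set g : ℝ := (d - s1 - ∑ t, p t) / k with hg
  have hg0 : 0 ≤ g := by
    apply div_nonneg _ hkR.le
    linarith
  constructor
  · -- membership: evenly spread schedule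
    refine ⟨fun t => s1 + ∑ n ∈ Finset.range (t : ℕ), q n + (t : ℕ) * g,
      fun t => s1 + ∑ n ∈ Finset.range (t : ℕ), q n + (t : ℕ) * g + g, ?_, ?_, ?_, ?_, ?_⟩
    · simp
    · intro t; dsimp only; linarith
    · intro t h
      have : ∑ n ∈ Finset.range ((t : ℕ) + 1), q n
          = ∑ n ∈ Finset.range (t : ℕ), q n + q (t : ℕ) := Finset.sum_range_succ q _
      simp only [this, hqval t]
      push_cast
      ring_nf
      linarith
    · have hk1 : (k - 1) + 1 = k := Nat.succ_pred_eq_of_pos hk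
      have hlt : k - 1 < k := Nat.sub_lt hk Nat.one_pos
      have hqk : q (k - 1) = p ⟨k - 1, hlt⟩ := by simp [hq, hlt]
      have hsum' : ∑ n ∈ Finset.range k, q n
          = ∑ n ∈ Finset.range (k - 1), q n + q (k - 1) := by
        rw [← hk1, Finset.sum_range_succ]; simp [hk1]
      have hcast : ((k - 1 : ℕ) : ℝ) = (k : ℝ) - 1 := by
        have : (1 : ℕ) ≤ k := hk
        push_cast [Nat.cast_sub this]; ring
      have hkg : (k : ℝ) * g = d - s1 - ∑ t, p t := by
        rw [hg]; field_simp [hkR.ne']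
      simp only [hcast, hqk.symm]
      have : s1 + ∑ n ∈ Finset.range (k - 1), q n + ((k:ℝ) - 1) * g + g + q (k - 1)
          = s1 + ∑ n ∈ Finset.range k, q n + (k:ℝ) * g := by
        rw [hsum']; ring
      rw [this, hkg, ← hsum]
      linarith
    · intro t; simp
  · -- upper bound
    rintro v ⟨e, l, he0, hel, hchain, hlast, hv⟩
    have key : ∀ n, ∀ h : n < k,
        s1 + ∑ u ∈ Finset.range (n + 1), q u + (n + 1 : ℝ) * v ≤ l ⟨n, h⟩ + p ⟨n, h⟩ := by
      intro n
      induction n with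
      | zero =>
        intro h
        have h1 := hv ⟨0, h⟩
        have h2 : (⟨0, h⟩ : Fin k) = ⟨0, hk⟩ := rfl
        have hq0 : q 0 = p ⟨0, h⟩ := by simp [hq, h]
        simp only [zero_add, Finset.sum_range_one, hq0, Nat.cast_zero]
        rw [h2] at *
        push_cast
        linarith [hv ⟨0, hk⟩]
      | succ n ih =>
        intro h
        have hn : n < k := Nat.lt_of_succ_lt h
        have hc : l ⟨n, hn⟩ + p ⟨n, hn⟩ ≤ e ⟨n + 1, h⟩ := hchain ⟨n, hn⟩ h
        have hvn := hv ⟨n + 1, h⟩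
        have hqn : q (n + 1) = p ⟨n + 1, h⟩ := by simp [hq, h]
        have := ih hn
        rw [Finset.sum_range_succ]
        push_cast
        push_cast at this
        linarith [this, hc, hvn]
    have hlt : k - 1 < k := Nat.sub_lt hk Nat.one_pos
    have hk1 : (k - 1) + 1 = k := Nat.succ_pred_eq_of_pos hk
    have h := key (k - 1) hlt
    rw [hk1] at h
    have : s1 + ∑ u ∈ Finset.range k, q u + (k : ℝ) * v ≤ d := by
      have hcast : ((k - 1 : ℕ) : ℝ) + 1 = (k : ℝ) := by exact_mod_cast congrArg (Nat.cast (R := ℕ)) hk1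
      rw [hcast] at h
      linarith [hlast, h]
    rw [← hsum] at this
    rw [hg, le_div_iff₀ hkR]
    linarith
end

section
/- If every job's processing-time excess over plan is absorbed by its free slack in every realization — i.e., D_j ≤ p_j + fs_j surely for all j where fs_j = min over direct successors i of (s_i - s_j - p_j) — then every job starts exactly at its planned time: X_j = s_j surely for all jobs j. -/
open Finset

/-- If every job's processing-time excess over plan is absorbed by its free slack in
every realization — `D j ≤ p j + fs j` surely for every non-sink job `j` — then every
job starts exactly at its planned time: `X j = s j` surely. -/
theorem start_on_time_of_slack_absorbs {J : Type} [Fintype J]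
    (succ : J → J → Prop) [DecidableRel succ]
    {Ω : Type}
    (s p fs : J → ℝ) (D X Y : J → Ω → ℝ)
    (hp : ∀ j, 0 ≤ p j) (hD : ∀ j ω, 0 ≤ D j ω)
    (hwf : WellFounded (fun i j => succ j i))
    (hfeas : ∀ j i, succ j i → s j + p j ≤ s i)
    (hfs : ∀ j (h : (univ.filter (fun i => succ j i)).Nonempty),
      fs j = (univ.filter (fun i => succ j i)).inf' h (fun i => s i - s j - p j))
    (hD_abs : ∀ j, (univ.filter (fun i => succ j i)).Nonempty → ∀ ω, D j ω ≤ p j + fs j)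
    (hX_src : ∀ j, (univ.filter (fun i => succ i j)) = ∅ → ∀ ω, X j ω = s j)
    (hX_rec : ∀ j (h : (univ.filter (fun i => succ i j)).Nonempty), ∀ ω,
      X j ω = max (s j) ((univ.filter (fun i => succ i j)).sup' h (fun i => Y i ω)))
    (hY : ∀ j ω, Y j ω = X j ω + D j ω) :
    ∀ j, ∀ ω, X j ω = s j := by
  have htc : WellFounded (Relation.TransGen (fun i j => succ i j)) := by
    have hwf' : WellFounded (Relation.TransGen (fun i j => succ j i)) := hwf.transGen
    haveI : IsIrrefl J (Relation.TransGen (fun i j => succ j i)) := hwf'.isIrrefl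
    haveI it : IsTrans J (Relation.TransGen (fun i j => succ i j)) :=
      ⟨fun _ _ _ h1 h2 => h1.trans h2⟩
    haveI ii : IsIrrefl J (Relation.TransGen (fun i j => succ i j)) :=
      ⟨fun a h => irrefl (r := Relation.TransGen (fun i j => succ j i)) a
        ((Relation.transGen_swap (r := fun i j => succ i j)).mpr h)⟩
    exact Finite.wellFounded_of_trans_of_irrefl _
  intro j
  induction j using htc.induction with
  | _ j ih =>
    intro ω
    rcases eq_or_ne (univ.filter (fun i => succ i j)) ∅ with he | hne
    · exact hX_src j he ω
    · have h : (univ.filter (fun i => succ i j)).Nonempty :=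
        Finset.nonempty_of_ne_empty hne
      rw [hX_rec j h ω]
      have hsup : (univ.filter (fun i => succ i j)).sup' h (fun i => Y i ω) ≤ s j := by
        apply Finset.sup'_le
        intro i hi
        have hsij : succ i j := (Finset.mem_filter.mp hi).2
        have hXi : X i ω = s i := ih i (Relation.TransGen.single hsij) ω
        have hne_i : (univ.filter (fun k => succ i k)).Nonempty :=
          ⟨j, Finset.mem_filter.mpr ⟨Finset.mem_univ _, hsij⟩⟩
        have hfsi : fs i ≤ s j - s i - p i := by
          rw [hfs i hne_i]
          exact Finset.inf'_le _ (Finset.mem_filter.mpr ⟨Finset.mem_univ _, hsij⟩)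
        have hDi := hD_abs i hne_i ω
        rw [hY i ω, hXi]
        linarith
      rw [max_eq_left hsup]
end
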